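/- For every m ∈ ℕ, τ_3(2^m + m) ≥ m·2^{m−1}: there is an almost 3-Gallai colouring of E(K_n) with n = 2^m + m using three colours {red, blue, green} containing exactly m·2^{m−1} rainbow triangles. Namely, partition the vertices into L = {0,1}^m and R = [m]; colour the edge between u ∈ L and i ∈ R blue if u_i = 1 and red otherwise; colour the edge between u, v ∈ L green if their Hamming distance is 1; and colour all remaining edges red. -/

import Mathlib

set_option maxHeartbeats 1000000

/-- A set `S` of vertices of `K_n` is a rainbow `t`-clique for the edge colouring `c`
if it has `t` vertices and the colours of its edges are pairwise distinct. -/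
def IsRainbowClique {n : ℕ} (t : ℕ) (c : Sym2 (Fin n) → ℕ) (S : Finset (Fin n)) : Prop :=
  S.card = t ∧
    ∀ a ∈ S, ∀ b ∈ S, ∀ x ∈ S, ∀ y ∈ S,
      a ≠ b → x ≠ y → s(a, b) ≠ s(x, y) → c s(a, b) ≠ c s(x, y)

/-- A colouring of `E(K_n)` is almost `t`-Gallai if no two (distinct) rainbow `t`-cliques
share an edge. -/
def AlmostGallai {n : ℕ} (t : ℕ) (c : Sym2 (Fin n) → ℕ) : Prop :=
  ∀ S T : Finset (Fin n), IsRainbowClique t c S → IsRainbowClique t c T → S ≠ T →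
    ∀ a b : Fin n, a ≠ b → a ∈ S → b ∈ S → a ∈ T → b ∈ T → False

/-- The number of rainbow `t`-cliques of the colouring `c` of `E(K_n)`. -/
noncomputable def rainbowCount {n : ℕ} (t : ℕ) (c : Sym2 (Fin n) → ℕ) : ℕ :=
  {S : Finset (Fin n) | IsRainbowClique t c S}.ncard


/-- `tau t n` : the maximum number of rainbow `t`-cliques over all almost `t`-Gallai
colourings of `E(K_n)`. -/
noncomputable def tau (t n : ℕ) : ℕ :=
  sSup {k | ∃ c : Sym2 (Fin n) → ℕ, AlmostGallai t c ∧ rainbowCount t c = k}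

/-! ### Construction -/

def fcol (m : ℕ) (a b : Fin (2 ^ m + m)) : ℕ :=
  if a.val < 2 ^ m then
    if b.val < 2 ^ m then
      (if a.val ^^^ b.val = 2 ^ (a.val ^^^ b.val).log2 then 2 else 0)
    else (if a.val.testBit (b.val - 2 ^ m) then 1 else 0)
  else
    if b.val < 2 ^ m then (if b.val.testBit (a.val - 2 ^ m) then 1 else 0)
    else 0

lemma fcol_symm (m : ℕ) (a b : Fin (2 ^ m + m)) : fcol m a b = fcol m b a := by
  unfold fcol
  rcases lt_or_ge a.val (2 ^ m) with h1 | h1 <;> rcases lt_or_ge b.val (2 ^ m) with h2 | h2 <;>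
    simp [h1, h2, Nat.not_lt.2, Nat.xor_comm a.val b.val]

def ccol (m : ℕ) : Sym2 (Fin (2 ^ m + m)) → ℕ := Sym2.lift ⟨fcol m, fcol_symm m⟩

lemma ccol_mk (m : ℕ) (a b : Fin (2 ^ m + m)) : ccol m s(a, b) = fcol m a b := rfl

lemma ccol_lt3 (m : ℕ) (e : Sym2 (Fin (2 ^ m + m))) : ccol m e < 3 := by
  induction e using Sym2.ind with
  | _ a b => rw [ccol_mk]; unfold fcol; split_ifs <;> omega

def vL (m : ℕ) (u : Fin (2 ^ m)) : Fin (2 ^ m + m) :=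
  ⟨u.val, by have := u.isLt; omega⟩

def vR (m : ℕ) (k : Fin m) : Fin (2 ^ m + m) :=
  ⟨2 ^ m + k.val, by have := k.isLt; omega⟩

lemma two_pow_lt (m : ℕ) (k : Fin m) : 2 ^ k.val < 2 ^ m :=
  Nat.pow_lt_pow_right one_lt_two k.isLt

def bflip (m : ℕ) (k : Fin m) (u : Fin (2 ^ m)) : Fin (2 ^ m) :=
  ⟨u.val ^^^ 2 ^ k.val, Nat.xor_lt_two_pow u.isLt (two_pow_lt m k)⟩

lemma bflip_val (m : ℕ) (k : Fin m) (u : Fin (2 ^ m)) :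
    (bflip m k u).val = u.val ^^^ 2 ^ k.val := rfl

lemma xor_bflip (m : ℕ) (k : Fin m) (u : Fin (2 ^ m)) :
    u.val ^^^ (bflip m k u).val = 2 ^ k.val := by
  rw [bflip_val, ← Nat.xor_assoc, Nat.xor_self, Nat.zero_xor]

lemma bflip_bflip (m : ℕ) (k : Fin m) (u : Fin (2 ^ m)) : bflip m k (bflip m k u) = u := by
  apply Fin.ext
  rw [bflip_val, bflip_val, Nat.xor_assoc, Nat.xor_self, Nat.xor_zero]

lemma bflip_testBit (m : ℕ) (k : Fin m) (u : Fin (2 ^ m)) :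
    (bflip m k u).val.testBit k.val = !(u.val.testBit k.val) := by
  simp [bflip_val, Nat.testBit_xor, Nat.testBit_two_pow_self]

@[simp] lemma vL_inj (m : ℕ) {u v : Fin (2 ^ m)} : vL m u = vL m v ↔ u = v := by
  simp [vL, Fin.ext_iff]

@[simp] lemma vR_inj (m : ℕ) {k k' : Fin m} : vR m k = vR m k' ↔ k = k' := by
  simp [vR, Fin.ext_iff]

@[simp] lemma vL_ne_vR (m : ℕ) (u : Fin (2 ^ m)) (k : Fin m) : ¬ (vL m u = vR m k) := by
  simp only [vL, vR, Fin.ext_iff]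
  have := u.isLt; omega

@[simp] lemma vR_ne_vL (m : ℕ) (u : Fin (2 ^ m)) (k : Fin m) : ¬ (vR m k = vL m u) := by
  simp only [vL, vR, Fin.ext_iff]
  have := u.isLt; omega

def enc (m : ℕ) (k : Fin m) (u : Fin (2 ^ m)) : Finset (Fin (2 ^ m + m)) :=
  {vL m u, vL m (bflip m k u), vR m k}

/-! ### Colour computations -/

lemma ccol_LL (m : ℕ) (u v : Fin (2 ^ m)) :
    ccol m s(vL m u, vL m v) =
      if u.val ^^^ v.val = 2 ^ (u.val ^^^ v.val).log2 then 2 else 0 := by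
  rw [ccol_mk]; unfold fcol
  simp [vL, u.isLt, v.isLt]
  rfl

lemma ccol_LR (m : ℕ) (u : Fin (2 ^ m)) (k : Fin m) :
    ccol m s(vL m u, vR m k) = if u.val.testBit k.val then 1 else 0 := by
  rw [ccol_mk]; unfold fcol
  simp [vL, vR, u.isLt]

/-! ### Extraction lemmas -/

lemma ccol_eq_two (m : ℕ) {a b : Fin (2 ^ m + m)} (h : ccol m s(a, b) = 2) :
    a.val < 2 ^ m ∧ b.val < 2 ^ m ∧ a.val ^^^ b.val = 2 ^ (a.val ^^^ b.val).log2 := by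
  rw [ccol_mk] at h; unfold fcol at h
  split_ifs at h with h1 h2 h3 h4 h5 h6 <;>
    first
      | exact ⟨h1, h2, h3⟩
      | omega

lemma ccol_eq_one (m : ℕ) {a b : Fin (2 ^ m + m)} (h : ccol m s(a, b) = 1) :
    (a.val < 2 ^ m ∧ ¬ b.val < 2 ^ m ∧ a.val.testBit (b.val - 2 ^ m) = true) ∨
    (¬ a.val < 2 ^ m ∧ b.val < 2 ^ m ∧ b.val.testBit (a.val - 2 ^ m) = true) := by
  rw [ccol_mk] at h; unfold fcol at h
  by_cases h1 : a.val < 2 ^ m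
  · rw [if_pos h1] at h
    by_cases h2 : b.val < 2 ^ m
    · rw [if_pos h2] at h
      exfalso; split_ifs at h <;> omega
    · rw [if_neg h2] at h
      by_cases h4 : a.val.testBit (b.val - 2 ^ m) = true
      · exact Or.inl ⟨h1, h2, h4⟩
      · rw [if_neg h4] at h; omega
  · rw [if_neg h1] at h
    by_cases h2 : b.val < 2 ^ m
    · rw [if_pos h2] at h
      by_cases h4 : b.val.testBit (a.val - 2 ^ m) = true
      · exact Or.inr ⟨h1, h2, h4⟩
      · rw [if_neg h4] at h; omega
    · rw [if_neg h2] at h; omega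

lemma ccol_zero_LR (m : ℕ) {a b : Fin (2 ^ m + m)} (ha : a.val < 2 ^ m)
    (hb : ¬ b.val < 2 ^ m) (h : ccol m s(a, b) = 0) :
    a.val.testBit (b.val - 2 ^ m) = false := by
  rw [ccol_mk] at h; unfold fcol at h
  rw [if_pos ha, if_neg hb] at h
  by_cases h4 : a.val.testBit (b.val - 2 ^ m) = true
  · rw [if_pos h4] at h; exact absurd h one_ne_zero
  · exact Bool.eq_false_iff.mpr h4

/-! ### The canonical sets are exactly the rainbow triangles -/

lemma rainbow_of_three {n : ℕ} (c : Sym2 (Fin n) → ℕ) (p q r : Fin n)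
    (hpq : p ≠ q) (hpr : p ≠ r) (hqr : q ≠ r)
    (h1 : c s(p, q) ≠ c s(p, r)) (h2 : c s(p, q) ≠ c s(q, r))
    (h3 : c s(p, r) ≠ c s(q, r)) :
    IsRainbowClique 3 c {p, q, r} := by
  constructor
  · rw [Finset.card_insert_of_notMem (by simp [hpq, hpr]),
      Finset.card_insert_of_notMem (by simp [hqr]), Finset.card_singleton]
  · intro a ha b hb x hx y hy hab hxy hne
    simp only [Finset.mem_insert, Finset.mem_singleton] at ha hb hx hy
    have key : ∀ a b : Fin n, (a = p ∨ a = q ∨ a = r) → (b = p ∨ b = q ∨ b = r) → a ≠ b →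
        (s(a, b) = s(p, q) ∨ s(a, b) = s(p, r) ∨ s(a, b) = s(q, r)) := by
      rintro a b (rfl | rfl | rfl) (rfl | rfl | rfl) h <;>
        first
          | exact absurd rfl h
          | exact Or.inl rfl
          | exact Or.inr (Or.inl rfl)
          | exact Or.inr (Or.inr rfl)
          | exact Or.inl (Sym2.eq_swap)
          | exact Or.inr (Or.inl (Sym2.eq_swap))
          | exact Or.inr (Or.inr (Sym2.eq_swap))
    rcases key a b ha hb hab with h | h | h <;> rcases key x y hx hy hxy with h' | h' | h' <;>
      rw [h, h'] at hne ⊢ <;>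
      first
        | exact absurd rfl hne
        | exact h1 | exact h1.symm | exact h2 | exact h2.symm | exact h3 | exact h3.symm

lemma core (m : ℕ) (p q r : Fin (2 ^ m + m))
    (h2 : ccol m s(p, q) = 2) (h1 : ccol m s(p, r) = 1) (h0 : ccol m s(q, r) = 0) :
    ∃ (k : Fin m) (u : Fin (2 ^ m)), u.val.testBit k.val = false ∧
      ({p, q, r} : Finset (Fin (2 ^ m + m))) = enc m k u := by
  obtain ⟨hp, hq, hx⟩ := ccol_eq_two m h2
  have hblue : ¬ r.val < 2 ^ m ∧ p.val.testBit (r.val - 2 ^ m) = true := by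
    rcases ccol_eq_one m h1 with ⟨_, hr, hb⟩ | ⟨hnp, _, _⟩
    · exact ⟨hr, hb⟩
    · exact absurd hp hnp
  obtain ⟨hr, hpbit⟩ := hblue
  have hqbit : q.val.testBit (r.val - 2 ^ m) = false := ccol_zero_LR m hq hr h0
  set j := r.val - 2 ^ m with hj
  have hjm : j < m := by have := r.isLt; omega
  set K := (p.val ^^^ q.val).log2 with hK
  have hxj : (p.val ^^^ q.val).testBit j = true := by
    rw [Nat.testBit_xor, hpbit, hqbit]; rfl
  have hjK : j = K := by
    by_contra hne
    rw [hx, Nat.testBit_two_pow_of_ne (fun h => hne h.symm)] at hxj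
    exact Bool.false_ne_true hxj
  refine ⟨⟨j, hjm⟩, ⟨q.val, hq⟩, hqbit, ?_⟩
  have hflip : bflip m ⟨j, hjm⟩ ⟨q.val, hq⟩ = ⟨p.val, hp⟩ := by
    apply Fin.ext
    rw [bflip_val]
    show q.val ^^^ 2 ^ j = p.val
    rw [hjK, ← hx, Nat.xor_comm p.val q.val, ← Nat.xor_assoc, Nat.xor_self, Nat.zero_xor]
  have e1 : vL m ⟨q.val, hq⟩ = q := rfl
  have e2 : vL m ⟨p.val, hp⟩ = p := rfl
  have e3 : vR m ⟨j, hjm⟩ = r := by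
    apply Fin.ext
    show 2 ^ m + j = r.val
    omega
  simp only [enc, hflip, e1, e2, e3]
  ext t
  simp only [Finset.mem_insert, Finset.mem_singleton]
  tauto

lemma rainbow_iff (m : ℕ) (S : Finset (Fin (2 ^ m + m))) :
    IsRainbowClique 3 (ccol m) S ↔
      ∃ (k : Fin m) (u : Fin (2 ^ m)), u.val.testBit k.val = false ∧ S = enc m k u := by
  constructor
  · rintro ⟨hcard, hcol⟩
    obtain ⟨a, b, d, hab, had, hbd, rfl⟩ := Finset.card_eq_three.mp hcard
    have ma : a ∈ ({a, b, d} : Finset (Fin (2 ^ m + m))) := by simp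
    have mb : b ∈ ({a, b, d} : Finset (Fin (2 ^ m + m))) := by simp
    have md : d ∈ ({a, b, d} : Finset (Fin (2 ^ m + m))) := by simp
    have e12 : s(a, b) ≠ s(a, d) := fun h => by
      rcases Sym2.eq_iff.mp h with ⟨_, h'⟩ | ⟨h', _⟩
      · exact hbd h'
      · exact had h'
    have e13 : s(a, b) ≠ s(b, d) := fun h => by
      rcases Sym2.eq_iff.mp h with ⟨h', _⟩ | ⟨h', _⟩
      · exact hab h'
      · exact had h'
    have e23 : s(a, d) ≠ s(b, d) := fun h => by
      rcases Sym2.eq_iff.mp h with ⟨h', _⟩ | ⟨h', _⟩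
      · exact hab h'
      · exact had h'
    have c12 : ccol m s(a, b) ≠ ccol m s(a, d) := hcol a ma b mb a ma d md hab had e12
    have c13 : ccol m s(a, b) ≠ ccol m s(b, d) := hcol a ma b mb b mb d md hab hbd e13
    have c23 : ccol m s(a, d) ≠ ccol m s(b, d) := hcol a ma d md b mb d md had hbd e23
    have l1 := ccol_lt3 m s(a, b)
    have l2 := ccol_lt3 m s(a, d)
    have l3 := ccol_lt3 m s(b, d)
    have swap : ∀ x y : Fin (2 ^ m + m), ccol m s(x, y) = ccol m s(y, x) := by
      intro x y; rw [Sym2.eq_swap]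
    have hcases :
        (ccol m s(a, b) = 2 ∧ ccol m s(a, d) = 1 ∧ ccol m s(b, d) = 0) ∨
        (ccol m s(a, b) = 2 ∧ ccol m s(a, d) = 0 ∧ ccol m s(b, d) = 1) ∨
        (ccol m s(a, d) = 2 ∧ ccol m s(a, b) = 1 ∧ ccol m s(b, d) = 0) ∨
        (ccol m s(a, d) = 2 ∧ ccol m s(a, b) = 0 ∧ ccol m s(b, d) = 1) ∨
        (ccol m s(b, d) = 2 ∧ ccol m s(a, b) = 1 ∧ ccol m s(a, d) = 0) ∨
        (ccol m s(b, d) = 2 ∧ ccol m s(a, b) = 0 ∧ ccol m s(a, d) = 1) := by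
      omega
    rcases hcases with ⟨g, b1, r1⟩ | ⟨g, r1, b1⟩ | ⟨g, b1, r1⟩ | ⟨g, r1, b1⟩ |
        ⟨g, b1, r1⟩ | ⟨g, r1, b1⟩
    · exact core m a b d g b1 r1
    · obtain ⟨k, u, hbit, henc⟩ := core m b a d ((swap b a).trans g) b1 r1
      refine ⟨k, u, hbit, ?_⟩
      rw [← henc]; ext t; simp only [Finset.mem_insert, Finset.mem_singleton]; tauto
    · obtain ⟨k, u, hbit, henc⟩ := core m a d b g b1 ((swap d b).trans r1)
      refine ⟨k, u, hbit, ?_⟩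
      rw [← henc]; ext t; simp only [Finset.mem_insert, Finset.mem_singleton]; tauto
    · obtain ⟨k, u, hbit, henc⟩ := core m d a b ((swap d a).trans g) ((swap d b).trans b1) r1
      refine ⟨k, u, hbit, ?_⟩
      rw [← henc]; ext t; simp only [Finset.mem_insert, Finset.mem_singleton]; tauto
    · obtain ⟨k, u, hbit, henc⟩ := core m b d a g ((swap b a).trans b1) ((swap d a).trans r1)
      refine ⟨k, u, hbit, ?_⟩
      rw [← henc]; ext t; simp only [Finset.mem_insert, Finset.mem_singleton]; tauto
    · obtain ⟨k, u, hbit, henc⟩ := core m d b a ((swap d b).trans g) ((swap d a).trans b1)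
        ((swap b a).trans r1)
      refine ⟨k, u, hbit, ?_⟩
      rw [← henc]; ext t; simp only [Finset.mem_insert, Finset.mem_singleton]; tauto
  · rintro ⟨k, u, hbit, rfl⟩
    have hflipbit : (bflip m k u).val.testBit k.val = true := by
      rw [bflip_testBit, hbit]; rfl
    have huv : u ≠ bflip m k u := by
      intro h
      rw [← h, hbit] at hflipbit
      exact Bool.false_ne_true hflipbit
    have cLL : ccol m s(vL m u, vL m (bflip m k u)) = 2 := by
      rw [ccol_LL, if_pos]
      rw [xor_bflip, Nat.log2_two_pow]
    have cL0 : ccol m s(vL m u, vR m k) = 0 := by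
      rw [ccol_LR, if_neg]
      rw [hbit]; exact Bool.false_ne_true
    have cL1 : ccol m s(vL m (bflip m k u), vR m k) = 1 := by
      rw [ccol_LR, if_pos hflipbit]
    refine rainbow_of_three (ccol m) (vL m u) (vL m (bflip m k u)) (vR m k)
      (by simpa using huv) (vL_ne_vR m u k) (vL_ne_vR m (bflip m k u) k) ?_ ?_ ?_
    · rw [cLL, cL0]; omega
    · rw [cLL, cL1]; omega
    · rw [cL0, cL1]; omega

/-! ### Uniqueness of the encoding on shared edges -/

lemma pow_two_fin_inj {m : ℕ} {k k' : Fin m} (h : 2 ^ k.val = 2 ^ k'.val) : k = k' :=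
  Fin.ext (Nat.pow_right_injective (le_refl 2) h)

lemma shared_edge (m : ℕ) (k k' : Fin m) (u u' : Fin (2 ^ m))
    (hu : u.val.testBit k.val = false) (hu' : u'.val.testBit k'.val = false)
    (a b : Fin (2 ^ m + m)) (hab : a ≠ b)
    (haS : a ∈ enc m k u) (hbS : b ∈ enc m k u)
    (haT : a ∈ enc m k' u') (hbT : b ∈ enc m k' u') :
    k = k' ∧ u = u' := by
  have hfb : (bflip m k u).val.testBit k.val = true := by rw [bflip_testBit, hu]; rfl
  have hfb' : (bflip m k' u').val.testBit k'.val = true := by rw [bflip_testBit, hu']; rfl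
  have case1 : u = u' → bflip m k u = bflip m k' u' → k = k' ∧ u = u' := by
    intro h1 h2
    have h3 : u.val ^^^ (bflip m k u).val = u'.val ^^^ (bflip m k' u').val := by
      rw [h2, h1]
    have h4 : 2 ^ k.val = 2 ^ k'.val :=
      (xor_bflip m k u).symm.trans (h3.trans (xor_bflip m k' u'))
    exact ⟨pow_two_fin_inj h4, h1⟩
  have case2 : u = bflip m k' u' → bflip m k u = u' → k = k' ∧ u = u' := by
    intro h1 h2
    exfalso
    have h3 : u.val ^^^ (bflip m k u).val = (bflip m k' u').val ^^^ u'.val := by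
      rw [h2, h1]
    have h4 : 2 ^ k.val = 2 ^ k'.val :=
      (xor_bflip m k u).symm.trans
        (h3.trans ((Nat.xor_comm _ _).trans (xor_bflip m k' u')))
    have hkk : k = k' := pow_two_fin_inj h4
    rw [h1, hkk, hfb'] at hu
    exact Bool.noConfusion hu
  have case3 : k = k' → u = u' → k = k' ∧ u = u' := fun h1 h2 => ⟨h1, h2⟩
  have case4 : k = k' → u = bflip m k' u' → k = k' ∧ u = u' := by
    intro h1 h2
    exfalso
    rw [h2, ← h1, bflip_testBit, h1, hu'] at hu
    exact Bool.noConfusion hu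
  have case5 : k = k' → bflip m k u = u' → k = k' ∧ u = u' := by
    intro h1 h2
    exfalso
    rw [h2, h1, hu'] at hfb
    exact Bool.false_ne_true hfb
  have case6 : k = k' → bflip m k u = bflip m k' u' → k = k' ∧ u = u' := by
    intro h1 h2
    refine ⟨h1, ?_⟩
    have h3 := congrArg (bflip m k) h2
    rw [bflip_bflip, h1, bflip_bflip] at h3
    exact h3
  simp only [enc, Finset.mem_insert, Finset.mem_singleton] at haS hbS haT hbT
  rcases haS with rfl | rfl | rfl <;> rcases hbS with h | h | h <;>
    first
      | exact absurd h.symm hab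
      | subst h
  all_goals
    rcases haT with h1 | h1 | h1 <;> rcases hbT with h2 | h2 | h2 <;>
      first
        | exact absurd rfl hab
        | exact absurd h1 (vL_ne_vR m _ _)
        | exact absurd h2 (vL_ne_vR m _ _)
        | exact absurd h1 (vR_ne_vL m _ _)
        | exact absurd h2 (vR_ne_vL m _ _)
        | exact absurd (h1.trans h2.symm) hab
        | exact case1 ((vL_inj m).mp h1) ((vL_inj m).mp h2)
        | exact case1 ((vL_inj m).mp h2) ((vL_inj m).mp h1)
        | exact case2 ((vL_inj m).mp h1) ((vL_inj m).mp h2)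
        | exact case2 ((vL_inj m).mp h2) ((vL_inj m).mp h1)
        | exact case3 ((vR_inj m).mp h1) ((vL_inj m).mp h2)
        | exact case3 ((vR_inj m).mp h2) ((vL_inj m).mp h1)
        | exact case4 ((vR_inj m).mp h1) ((vL_inj m).mp h2)
        | exact case4 ((vR_inj m).mp h2) ((vL_inj m).mp h1)
        | exact case5 ((vR_inj m).mp h1) ((vL_inj m).mp h2)
        | exact case5 ((vR_inj m).mp h2) ((vL_inj m).mp h1)
        | exact case6 ((vR_inj m).mp h1) ((vL_inj m).mp h2)
        | exact case6 ((vR_inj m).mp h2) ((vL_inj m).mp h1)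

lemma almostGallai_ccol (m : ℕ) : AlmostGallai 3 (ccol m) := by
  intro S T hS hT hST a b hab haS hbS haT hbT
  rw [rainbow_iff] at hS hT
  obtain ⟨k, u, hu, rfl⟩ := hS
  obtain ⟨k', u', hu', rfl⟩ := hT
  obtain ⟨hk, hu2⟩ := shared_edge m k k' u u' hu hu' a b hab haS hbS haT hbT
  exact hST (by rw [hk, hu2])

/-! ### Counting -/

lemma count_half (m : ℕ) (k : Fin m) :
    (Finset.univ.filter (fun u : Fin (2 ^ m) => u.val.testBit k.val = false)).card
      = 2 ^ (m - 1) := by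
  classical
  set F := Finset.univ.filter (fun u : Fin (2 ^ m) => u.val.testBit k.val = false) with hF
  set G := Finset.univ.filter (fun u : Fin (2 ^ m) => ¬ (u.val.testBit k.val = false)) with hG
  have hsum : F.card + G.card = 2 ^ m := by
    rw [hF, hG, Finset.card_filter_add_card_filter_not, Finset.card_univ,
      Fintype.card_fin]
  have hbij : F.card = G.card := by
    apply Finset.card_nbij' (bflip m k) (bflip m k)
    · intro u hu
      simp only [hF, hG, Finset.mem_coe, Finset.mem_filter, Finset.mem_univ, true_and] at hu ⊢
      rw [bflip_testBit, hu]; simp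
    · intro u hu
      simp only [hF, hG, Finset.mem_coe, Finset.mem_filter, Finset.mem_univ, true_and] at hu ⊢
      rw [bflip_testBit]
      have h : u.val.testBit k.val = true := by simpa using hu
      rw [h]; rfl
    · intro u _; exact bflip_bflip m k u
    · intro u _; exact bflip_bflip m k u
  have hm : 0 < m := k.pos
  have hpow : 2 ^ m = 2 * 2 ^ (m - 1) := by
    rw [← pow_succ']
    congr 1
    omega
  omega

lemma rainbow_count_ccol (m : ℕ) : rainbowCount 3 (ccol m) = m * 2 ^ (m - 1) := by
  classical
  set D : Finset (Fin m × Fin (2 ^ m)) :=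
    Finset.univ.filter (fun p => p.2.val.testBit p.1.val = false) with hD
  have hset : {S : Finset (Fin (2 ^ m + m)) | IsRainbowClique 3 (ccol m) S}
      = ↑(D.image (fun p => enc m p.1 p.2)) := by
    ext S
    simp only [Set.mem_setOf_eq, Finset.coe_image, Set.mem_image, Finset.mem_coe,
      Finset.mem_filter, Finset.mem_univ, true_and, hD, rainbow_iff]
    constructor
    · rintro ⟨k, u, hbit, rfl⟩
      exact ⟨(k, u), hbit, rfl⟩
    · rintro ⟨⟨k, u⟩, hbit, rfl⟩
      exact ⟨k, u, hbit, rfl⟩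
  rw [rainbowCount, hset, Set.ncard_coe_finset]
  have hinj : Set.InjOn (fun p : Fin m × Fin (2 ^ m) => enc m p.1 p.2) ↑D := by
    rintro ⟨k, u⟩ h1 ⟨k', u'⟩ h2 h
    simp only [hD, Finset.coe_filter, Set.mem_setOf_eq, Finset.mem_univ, true_and] at h1 h2
    simp only at h
    have haS : vL m u ∈ enc m k u := by simp [enc]
    have hbS : vR m k ∈ enc m k u := by simp [enc]
    have haT : vL m u ∈ enc m k' u' := h ▸ haS
    have hbT : vR m k ∈ enc m k' u' := h ▸ hbS
    obtain ⟨hk, hu⟩ := shared_edge m k k' u u' h1 h2 (vL m u) (vR m k)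
      (vL_ne_vR m u k) haS hbS haT hbT
    rw [Prod.mk.injEq]
    exact ⟨hk, hu⟩
  rw [Finset.card_image_of_injOn hinj]
  have hcard : D.card = ∑ k : Fin m, (D.filter (fun p => p.1 = k)).card :=
    Finset.card_eq_sum_card_fiberwise (fun x _ => Finset.mem_univ x.1)
  rw [hcard]
  have hfiber : ∀ k : Fin m, (D.filter (fun p => p.1 = k)).card = 2 ^ (m - 1) := by
    intro k
    rw [← count_half m k]
    apply Finset.card_nbij' (fun p => p.2) (fun u => (k, u))
    · rintro ⟨k1, u⟩ hp
      simp only [hD, Finset.mem_coe, Finset.mem_filter, Finset.mem_univ, true_and] at hp ⊢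
      obtain ⟨ha, rfl⟩ := hp
      exact ha
    · intro u hu
      simp only [hD, Finset.mem_coe, Finset.mem_filter, Finset.mem_univ, true_and] at hu
      exact Finset.mem_filter.mpr ⟨Finset.mem_filter.mpr ⟨Finset.mem_univ _, hu⟩, rfl⟩
    · rintro ⟨k1, u⟩ hp
      simp only [hD, Finset.mem_coe, Finset.mem_filter, Finset.mem_univ, true_and] at hp
      obtain ⟨ha, rfl⟩ := hp
      rfl
    · intro u _; rfl
  rw [Finset.sum_congr rfl (fun k _ => hfiber k), Finset.sum_const, Finset.card_univ,
    Fintype.card_fin, smul_eq_mul]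

theorem tau_three_hypercube_construction (m : ℕ) :
    m * 2 ^ (m - 1) ≤ tau 3 (2 ^ m + m) ∧
    ∃ c : Sym2 (Fin (2 ^ m + m)) → ℕ, (∀ e, c e < 3) ∧ AlmostGallai 3 c ∧
      rainbowCount 3 c = m * 2 ^ (m - 1) := by
  have hwit : ∃ c : Sym2 (Fin (2 ^ m + m)) → ℕ, (∀ e, c e < 3) ∧ AlmostGallai 3 c ∧
      rainbowCount 3 c = m * 2 ^ (m - 1) :=
    ⟨ccol m, ccol_lt3 m, almostGallai_ccol m, rainbow_count_ccol m⟩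
  refine ⟨?_, hwit⟩
  have hmem : m * 2 ^ (m - 1) ∈
      {k | ∃ c : Sym2 (Fin (2 ^ m + m)) → ℕ, AlmostGallai 3 c ∧ rainbowCount 3 c = k} :=
    ⟨ccol m, almostGallai_ccol m, rainbow_count_ccol m⟩
  have hbdd : BddAbove
      {k | ∃ c : Sym2 (Fin (2 ^ m + m)) → ℕ, AlmostGallai 3 c ∧ rainbowCount 3 c = k} := by
    refine ⟨Nat.card (Finset (Fin (2 ^ m + m))), ?_⟩
    rintro x ⟨c, _, rfl⟩
    rw [rainbowCount]
    calc {S : Finset (Fin (2 ^ m + m)) | IsRainbowClique 3 c S}.ncard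
        ≤ (Set.univ : Set (Finset (Fin (2 ^ m + m)))).ncard :=
          Set.ncard_le_ncard (Set.subset_univ _) Set.finite_univ
      _ = Nat.card (Finset (Fin (2 ^ m + m))) := Set.ncard_univ _
  exact le_csSup hbdd hmem
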